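/- Suppose the solution semigroup of d/dt[v(t) - L v_t] = R v_t on C(I,ℂⁿ) satisfies ‖S(t)‖ ≤ c e^{γt} for all t ≥ 0. Then every column X_j of the fundamental solution (the generalized solution with initial value 0 on [-h,0) and value e_j at 0) satisfies |X_j(t)| ≤ c e^{γt} for all t ≥ 0. -/

import Mathlib

open MeasureTheory Filter Topology

/-- Property (A): pointwise limit of a uniformly bounded sequence of continuous maps. -/
def PropA {X : Type*} [TopologicalSpace X] {E : Type*} [NormedAddCommGroup E]
    (φ : X → E) : Prop :=
  ∃ f : ℕ → X → E, (∀ m, Continuous (f m)) ∧ (∃ C : ℝ, ∀ m x, ‖f m x‖ ≤ C) ∧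
    ∀ x, Tendsto (fun m => f m x) atTop (𝓝 (φ x))

/-- Classical solution of `d/dt [v(t) - L v_t] = R v_t` with `v_0 = φ`. -/
def IsNeutralSol (n : ℕ) (h : ℝ)
    (L R : C(Set.Icc (-h) (0:ℝ), Fin n → ℂ) →L[ℂ] (Fin n → ℂ))
    (φ : C(Set.Icc (-h) (0:ℝ), Fin n → ℂ)) (v : ℝ → Fin n → ℂ) : Prop :=
  ContinuousOn v (Set.Ici (-h)) ∧ (∀ s : Set.Icc (-h) (0:ℝ), v ↑s = φ s) ∧
  ∃ V : ℝ → C(Set.Icc (-h) (0:ℝ), Fin n → ℂ),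
    (∀ t, 0 ≤ t → ∀ s : Set.Icc (-h) (0:ℝ), V t s = v (t + ↑s)) ∧
    (∀ t, 0 ≤ t → HasDerivWithinAt (fun τ => v τ - L (V τ)) (R (V t)) (Set.Ici 0) t)

/-- Generalized solution of the integrated neutral equation with extended
operators `L_E`, `R_E` and initial datum `φ ∈ B_{nA}`. -/
def IsGenSol (n : ℕ) (h : ℝ)
    (LE RE : (Set.Icc (-h) (0:ℝ) → Fin n → ℂ) → Fin n → ℂ)
    (φ : Set.Icc (-h) (0:ℝ) → Fin n → ℂ) (y : ℝ → Fin n → ℂ) : Prop :=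
  (∀ s : Set.Icc (-h) (0:ℝ), y ↑s = φ s) ∧
  (∀ b : ℝ, PropA fun t : Set.Icc (-h) b => y ↑t) ∧
  ∀ t, 0 < t →
    MeasureTheory.IntegrableOn
      (fun s => RE fun u : Set.Icc (-h) (0:ℝ) => y (s + ↑u)) (Set.Ioo 0 t) ∧
    y t - LE (fun s : Set.Icc (-h) (0:ℝ) => y (t + ↑s)) =
      y 0 - LE φ + ∫ s in Set.Ioo 0 t, RE fun u : Set.Icc (-h) (0:ℝ) => y (s + ↑u)

open intervalIntegral

section Aux18

variable {n : ℕ}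

/-- The forced value of a σ-extension on continuous maps. -/
lemma sig_cont18 {α : Type*} [TopologicalSpace α] [CompactSpace α]
    (T : C(α, Fin n → ℂ) →L[ℂ] (Fin n → ℂ)) (TE : (α → Fin n → ℂ) → Fin n → ℂ)
    (hT : ∀ (φ : α → Fin n → ℂ) (fm : ℕ → C(α, Fin n → ℂ)),
      (∃ C : ℝ, ∀ m s, ‖fm m s‖ ≤ C) → (∀ s, Tendsto (fun m => fm m s) atTop (𝓝 (φ s))) →
      Tendsto (fun m => T (fm m)) atTop (𝓝 (TE φ)))
    (f : C(α, Fin n → ℂ)) : TE ⇑f = T f := by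
  have h1 := hT ⇑f (fun _ => f) ⟨‖f‖, fun m s => f.norm_coe_le_norm s⟩
    (fun s => tendsto_const_nhds)
  exact tendsto_nhds_unique h1 tendsto_const_nhds

lemma propA_bound18 {α : Type*} [TopologicalSpace α] {φ : α → Fin n → ℂ}
    (hp : PropA φ) : ∃ C : ℝ, 0 ≤ C ∧ ∀ x, ‖φ x‖ ≤ C := by
  obtain ⟨f, -, ⟨C, hC⟩, hlim⟩ := hp
  refine ⟨max C 0, le_max_right _ _, fun x => ?_⟩
  exact le_of_tendsto (hlim x).norm
    (Filter.Eventually.of_forall fun m => (hC m x).trans (le_max_left _ _))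

lemma meas_indicator18 {h b : ℝ} (hhb : -h ≤ b) {X : ℝ → Fin n → ℂ}
    (hp : PropA fun t : Set.Icc (-h) b => X ↑t) :
    StronglyMeasurable ((Set.Icc (-h) b).indicator X) := by
  obtain ⟨f, hfc, -, hlim⟩ := hp
  refine stronglyMeasurable_of_tendsto (f := fun k =>
      (Set.Icc (-h) b).indicator (fun t => f k (Set.projIcc (-h) b hhb t))) atTop
    (fun k => ((hfc k).comp continuous_projIcc).stronglyMeasurable.indicator
      measurableSet_Icc) ?_
  rw [tendsto_pi_nhds]
  intro t
  by_cases ht : t ∈ Set.Icc (-h) b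
  · simp only [Set.indicator_of_mem ht, Set.projIcc_of_mem hhb ht]
    exact hlim ⟨t, ht⟩
  · simp only [Set.indicator_of_notMem ht]
    exact tendsto_const_nhds

lemma X_intInt18 {h : ℝ} (hh : 0 < h) {X : ℝ → Fin n → ℂ}
    (hX0 : ∀ t < (0:ℝ), X t = 0)
    (hp : ∀ b, PropA fun t : Set.Icc (-h) b => X ↑t) :
    ∀ a b : ℝ, IntervalIntegrable X volume a b := by
  intro a b
  rw [intervalIntegrable_iff]
  set b' : ℝ := max (max a b) 0 with hb'def
  have hb'0 : (0:ℝ) ≤ b' := le_max_right _ _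
  have hb' : -h ≤ b' := by linarith
  obtain ⟨C, hC0, hC⟩ := propA_bound18 (hp b')
  have hmeas := meas_indicator18 hb' (hp b')
  have h1 : IntegrableOn X (Set.Iio 0) volume :=
    (integrableOn_zero).congr_fun (fun t ht => (hX0 t ht).symm) measurableSet_Iio
  have h2 : IntegrableOn X (Set.Icc (-h) b') volume := by
    have h3 : IntegrableOn ((Set.Icc (-h) b').indicator X) (Set.Icc (-h) b') volume := by
      refine Integrable.mono' (integrable_const C) hmeas.aestronglyMeasurable.restrict ?_
      filter_upwards [ae_restrict_mem measurableSet_Icc] with t ht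
      rw [Set.indicator_of_mem ht]
      exact hC ⟨t, ht⟩
    exact h3.congr_fun (fun t ht => Set.indicator_of_mem ht X) measurableSet_Icc
  refine (h1.union h2).mono_set ?_
  intro t ht
  rcases lt_or_ge t 0 with h' | h'
  · exact Or.inl h'
  · refine Or.inr ⟨by linarith, ?_⟩
    rcases Set.mem_uIoc.mp ht with h'' | h''
    · exact h''.2.trans ((le_max_right a b).trans (le_max_left _ _))
    · exact h''.2.trans ((le_max_left a b).trans (le_max_left _ _))

lemma v_cont18 {X : ℝ → Fin n → ℂ}
    (hXi : ∀ a b : ℝ, IntervalIntegrable X volume a b) (ε : ℝ) :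
    Continuous fun t => ε⁻¹ • ∫ r in t..(t+ε), X r := by
  have hP := intervalIntegral.continuous_primitive hXi 0
  have heq : (fun t => ∫ r in t..(t+ε), X r)
      = fun t => (∫ r in (0:ℝ)..(t+ε), X r) - ∫ r in (0:ℝ)..t, X r := by
    funext t
    rw [integral_interval_sub_left (hXi 0 (t+ε)) (hXi 0 t)]
  refine (?_ : Continuous fun t => ∫ r in t..(t+ε), X r).const_smul (ε⁻¹ : ℝ)
  rw [heq]
  exact (hP.comp (continuous_id.add continuous_const)).sub hP

end Aux18
section Aux18b

variable {n : ℕ}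

/-- σ-extension property (matches the hypotheses `hLE`, `hRE`). -/
def SigExt18 {α : Type*} [TopologicalSpace α] {n : ℕ}
    (T : C(α, Fin n → ℂ) →L[ℂ] (Fin n → ℂ))
    (TE : (α → Fin n → ℂ) → Fin n → ℂ) : Prop :=
  ∀ (φ : α → Fin n → ℂ) (fm : ℕ → C(α, Fin n → ℂ)),
    (∃ C : ℝ, ∀ m s, ‖fm m s‖ ≤ C) →
    (∀ s, Tendsto (fun m => fm m s) atTop (𝓝 (φ s))) →
    Tendsto (fun m => T (fm m)) atTop (𝓝 (TE φ))

lemma sigext_cont18 {α : Type*} [TopologicalSpace α] [CompactSpace α]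
    {T : C(α, Fin n → ℂ) →L[ℂ] (Fin n → ℂ)} {TE : (α → Fin n → ℂ) → Fin n → ℂ}
    (hT : SigExt18 T TE) (f : C(α, Fin n → ℂ)) : TE ⇑f = T f :=
  sig_cont18 T TE hT f

lemma sigext_zero18 {α : Type*} [TopologicalSpace α] [CompactSpace α]
    {T : C(α, Fin n → ℂ) →L[ℂ] (Fin n → ℂ)} {TE : (α → Fin n → ℂ) → Fin n → ℂ}
    (hT : SigExt18 T TE) : TE (fun _ => 0) = 0 := by
  have := sigext_cont18 hT 0
  simp at this
  exact this

variable {h Δ : ℝ}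
  {L : C(Set.Icc (-h) (0:ℝ), Fin n → ℂ) →L[ℂ] (Fin n → ℂ)}
  {LE : (Set.Icc (-h) (0:ℝ) → Fin n → ℂ) → Fin n → ℂ}
  {X : ℝ → Fin n → ℂ}

/-- The strictly delayed operator has zero extended value on shifts `X_r`, `0 ≤ r < Δ`. -/
lemma LE_small18 (hh : 0 < h) (hΔ0 : 0 < Δ)
    (hL : ∀ φ : C(Set.Icc (-h) (0:ℝ), Fin n → ℂ),
      (∀ s : Set.Icc (-h) (0:ℝ), (↑s : ℝ) ≤ -Δ → φ s = 0) → L φ = 0)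
    (hLE : SigExt18 L LE)
    (hX0 : ∀ t < (0:ℝ), X t = 0)
    (hp : ∀ b, PropA fun t : Set.Icc (-h) b => X ↑t)
    {r : ℝ} (hr0 : 0 ≤ r) (hrΔ : r < Δ) :
    LE (fun s : Set.Icc (-h) (0:ℝ) => X (r + ↑s)) = 0 := by
  have hb : -h ≤ Δ := by linarith
  obtain ⟨f, hfc, ⟨C, hfC⟩, hlim⟩ := hp Δ
  set χ : ℝ → ℝ := fun s => max 0 (min 1 ((s + Δ) / (Δ - r))) with hχdef
  have hχcont : Continuous χ := by
    apply continuous_const.max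
    exact continuous_const.min (by fun_prop)
  have hmem : ∀ s : Set.Icc (-h) (0:ℝ), r + ↑s ∈ Set.Icc (-h) Δ := by
    rintro ⟨s, hs1, hs2⟩
    exact ⟨by simpa using by linarith, by simpa using by linarith⟩
  set ck : ℕ → C(Set.Icc (-h) (0:ℝ), Fin n → ℂ) := fun k =>
    ⟨fun s => χ ↑s • f k (Set.projIcc (-h) Δ hb (r + ↑s)),
      ((hχcont.comp continuous_subtype_val).smul
        ((hfc k).comp (continuous_projIcc.comp
          (continuous_const.add continuous_subtype_val))))⟩ with hckdef
  have hLck : ∀ k, L (ck k) = 0 := by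
    intro k
    apply hL
    rintro ⟨s, hs1, hs2⟩ hsΔ
    have h1 : χ s = 0 := by
      have h2 : (s + Δ) / (Δ - r) ≤ 0 :=
        div_nonpos_of_nonpos_of_nonneg (by simp at hsΔ ⊢; linarith) (by linarith)
      simp only [hχdef]
      rw [max_eq_left]
      exact (min_le_right _ _).trans h2
    simp only [hckdef, ContinuousMap.coe_mk]
    rw [h1, zero_smul]
  have hχ01 : ∀ s : ℝ, 0 ≤ χ s ∧ χ s ≤ 1 := by
    intro s
    refine ⟨le_max_left _ _, ?_⟩
    rw [max_le_iff]
    exact ⟨zero_le_one, min_le_left _ _⟩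
  have hCnn : 0 ≤ C := le_trans (norm_nonneg _) (hfC 0 ⟨0, ⟨by linarith, by linarith⟩⟩)
  have htend := hLE (fun s : Set.Icc (-h) (0:ℝ) => X (r + ↑s)) ck
    ⟨C, by
      intro k s
      simp only [hckdef, ContinuousMap.coe_mk]
      rw [norm_smul]
      calc ‖χ ↑s‖ * ‖f k (Set.projIcc (-h) Δ hb (r + ↑s))‖
          ≤ 1 * C := by
            apply mul_le_mul _ (hfC _ _) (norm_nonneg _) zero_le_one
            rw [Real.norm_eq_abs, abs_le]
            exact ⟨by linarith [(hχ01 ↑s).1], (hχ01 ↑s).2⟩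
        _ = C := one_mul C⟩
    (by
      intro s
      simp only [hckdef, ContinuousMap.coe_mk]
      rw [Set.projIcc_of_mem hb (hmem s)]
      have h3 : Tendsto (fun k => χ ↑s • f k ⟨r + ↑s, hmem s⟩) atTop
          (𝓝 (χ ↑s • X (r + ↑s))) := (hlim ⟨r + ↑s, hmem s⟩).const_smul _
      convert h3 using 2
      rcases le_or_gt (-r) (↑s : ℝ) with hcase | hcase
      · have hχ1 : χ ↑s = 1 := by
          simp only [hχdef]
          rw [min_eq_left, max_eq_right zero_le_one]
          rw [le_div_iff₀ (by linarith)]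
          linarith
        rw [hχ1, one_smul]
      · have hX' : X (r + ↑s) = 0 := hX0 _ (by linarith)
        rw [hX', smul_zero])
  have h0 : Tendsto (fun k => L (ck k)) atTop (𝓝 0) := by
    simp only [hLck]
    exact tendsto_const_nhds
  exact (tendsto_nhds_unique htend h0)

end Aux18b
section Aux18c

variable {n : ℕ} {h : ℝ}

lemma lemM18 (hh : 0 < h)
    (T : C(Set.Icc (-h) (0:ℝ), Fin n → ℂ) →L[ℂ] (Fin n → ℂ))
    (TE : (Set.Icc (-h) (0:ℝ) → Fin n → ℂ) → Fin n → ℂ)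
    (hT : SigExt18 T TE)
    {X : ℝ → Fin n → ℂ}
    (hp : ∀ b, PropA fun t : Set.Icc (-h) b => X ↑t)
    {τ ε : ℝ} (hτ : 0 ≤ τ) (hε : 0 < ε) (hε1 : ε ≤ 1)
    (w : C(Set.Icc (-h) (0:ℝ), Fin n → ℂ))
    (hw : ∀ s : Set.Icc (-h) (0:ℝ), w s = ε⁻¹ • ∫ r in (τ + ↑s)..(τ + ↑s + ε), X r) :
    T w = ε⁻¹ • ∫ u in Set.Ioo (0:ℝ) ε,
      TE (fun s : Set.Icc (-h) (0:ℝ) => X (τ + u + ↑s)) := by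
  have hb : -h ≤ τ + 1 := by linarith
  obtain ⟨f, hfc, ⟨C, hfC⟩, hlim⟩ := hp (τ + 1)
  have hCnn : 0 ≤ C :=
    le_trans (norm_nonneg _) (hfC 0 ⟨0, by constructor <;> linarith⟩)
  have hvolIoo : volume (Set.Ioo (0:ℝ) ε) < ⊤ := by
    rw [Real.volume_Ioo]; exact ENNReal.ofReal_lt_top
  set Y : ℕ → C(ℝ, C(Set.Icc (-h) (0:ℝ), Fin n → ℂ)) := fun k =>
    ContinuousMap.curry ⟨fun p => f k (Set.projIcc (-h) (τ+1) hb (τ + p.1 + ↑p.2)), by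
      apply (hfc k).comp
      apply continuous_projIcc.comp
      fun_prop⟩ with hYdef
  have hYapp : ∀ k u (s : Set.Icc (-h) (0:ℝ)),
      Y k u s = f k (Set.projIcc (-h) (τ+1) hb (τ + u + ↑s)) := fun k u s => rfl
  have hmem : ∀ u ∈ Set.Ioo (0:ℝ) ε, ∀ s : Set.Icc (-h) (0:ℝ),
      τ + u + ↑s ∈ Set.Icc (-h) (τ+1) := by
    rintro u ⟨hu0, huε⟩ ⟨s, hs1, hs2⟩
    constructor
    · simp only []; linarith
    · simp only []; linarith
  have hYnorm : ∀ k u, ‖Y k u‖ ≤ C := by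
    intro k u
    rw [ContinuousMap.norm_le _ hCnn]
    intro s; rw [hYapp]; exact hfC _ _
  have hYint : ∀ k, IntegrableOn (fun u => Y k u) (Set.Ioo (0:ℝ) ε) volume := fun k =>
    (((Y k).continuous.integrableOn_Icc (a := 0) (b := ε))).mono_set Set.Ioo_subset_Icc_self
  set A : ℕ → C(Set.Icc (-h) (0:ℝ), Fin n → ℂ) := fun k =>
    ε⁻¹ • ∫ u in Set.Ioo (0:ℝ) ε, Y k u with hAdef
  have hAapp : ∀ k (s : Set.Icc (-h) (0:ℝ)),
      A k s = ε⁻¹ • ∫ u in Set.Ioo (0:ℝ) ε,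
        f k (Set.projIcc (-h) (τ+1) hb (τ + u + ↑s)) := by
    intro k s
    simp only [hAdef, ContinuousMap.smul_apply]
    rw [ContinuousMap.integral_apply (hYint k)]
    simp only [hYapp]
  have hAlim : ∀ s : Set.Icc (-h) (0:ℝ), Tendsto (fun k => A k s) atTop (𝓝 (w s)) := by
    intro s
    have hXw : w s = ε⁻¹ • ∫ u in Set.Ioo (0:ℝ) ε, X (τ + u + ↑s) := by
      rw [hw]
      congr 1
      have h1 : ∫ u in Set.Ioo (0:ℝ) ε, X (τ + u + ↑s)
          = ∫ u in (0:ℝ)..ε, X ((τ + ↑s) + u) := by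
        rw [intervalIntegral.integral_of_le hε.le, integral_Ioc_eq_integral_Ioo]
        apply setIntegral_congr_fun measurableSet_Ioo
        intro u _
        ring_nf
      rw [h1, integral_comp_add_left (fun r => X r) (τ + ↑s)]
      norm_num
    rw [hXw]
    simp only [hAapp]
    apply Tendsto.const_smul
    apply tendsto_integral_of_dominated_convergence (fun _ => C)
    · intro k
      exact (((hfc k).comp (continuous_projIcc.comp (by fun_prop))).aestronglyMeasurable).restrict
    · exact integrableOn_const hvolIoo.ne
    · intro k
      filter_upwards with u
      exact hfC _ _
    · filter_upwards [ae_restrict_mem measurableSet_Ioo] with u hu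
      rw [Set.projIcc_of_mem hb (hmem u hu s)]
      exact hlim _
  have hAnorm : ∀ k s, ‖A k s‖ ≤ C := by
    intro k s
    rw [hAapp, norm_smul]
    have h2 : ‖∫ u in Set.Ioo (0:ℝ) ε,
        f k (Set.projIcc (-h) (τ+1) hb (τ + u + ↑s))‖
        ≤ C * (volume (Set.Ioo (0:ℝ) ε)).toReal :=
      norm_setIntegral_le_of_norm_le_const hvolIoo (fun u _ => hfC _ _)
    rw [Real.volume_Ioo, sub_zero, ENNReal.toReal_ofReal hε.le] at h2
    have h3 : ‖ε⁻¹‖ = ε⁻¹ := by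
      rw [Real.norm_eq_abs, abs_of_pos (inv_pos.mpr hε)]
    rw [h3]
    calc ε⁻¹ * ‖∫ u in Set.Ioo (0:ℝ) ε,
          f k (Set.projIcc (-h) (τ+1) hb (τ + u + ↑s))‖
        ≤ ε⁻¹ * (C * ε) := by
          exact mul_le_mul_of_nonneg_left h2 (inv_pos.mpr hε).le
      _ = C := by field_simp
  have hstepA : Tendsto (fun k => T (A k)) atTop (𝓝 (T w)) := by
    have h4 := hT ⇑w A ⟨C, hAnorm⟩ hAlim
    rwa [sigext_cont18 hT w] at h4
  have hstepB : ∀ k, T (A k) = ε⁻¹ • ∫ u in Set.Ioo (0:ℝ) ε, T (Y k u) := by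
    intro k
    simp only [hAdef]
    rw [ContinuousLinearMap.map_smul_of_tower,
      ← ContinuousLinearMap.integral_comp_comm T (hYint k)]
  have hstepC : Tendsto (fun k => ∫ u in Set.Ioo (0:ℝ) ε, T (Y k u)) atTop
      (𝓝 (∫ u in Set.Ioo (0:ℝ) ε,
        TE (fun s : Set.Icc (-h) (0:ℝ) => X (τ + u + ↑s)))) := by
    apply tendsto_integral_of_dominated_convergence (fun _ => ‖T‖ * C)
    · intro k
      exact ((T.continuous.comp (Y k).continuous).aestronglyMeasurable).restrict
    · exact integrableOn_const hvolIoo.ne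
    · intro k
      filter_upwards with u
      exact (T.le_opNorm _).trans (mul_le_mul_of_nonneg_left (hYnorm k u) (norm_nonneg _))
    · filter_upwards [ae_restrict_mem measurableSet_Ioo] with u hu
      apply hT (fun s : Set.Icc (-h) (0:ℝ) => X (τ + u + ↑s)) (fun k => Y k u)
        ⟨C, fun k s => by rw [hYapp]; exact hfC _ _⟩
      intro s
      have h5 : ∀ k, Y k u s = f k (Set.projIcc (-h) (τ+1) hb (τ + u + ↑s)) :=
        fun k => hYapp k u s
      simp only [h5, Set.projIcc_of_mem hb (hmem u hu s)]
      exact hlim _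
  have hfinal : Tendsto (fun k => T (A k)) atTop
      (𝓝 (ε⁻¹ • ∫ u in Set.Ioo (0:ℝ) ε,
        TE (fun s : Set.Icc (-h) (0:ℝ) => X (τ + u + ↑s)))) := by
    simp only [hstepB]
    exact hstepC.const_smul _
  exact tendsto_nhds_unique hstepA hfinal

end Aux18c
set_option maxHeartbeats 2000000 in
/-- If the solution semigroup `S(t)` of the homogeneous neutral
equation satisfies `‖S(t)‖ ≤ c e^{γt}` for `t ≥ 0`, then every column `X_j` of
the fundamental solution (the generalized solution with initial value `0` on
`[-h,0)` and `e_j` at `0`) satisfies `|X_j(t)| ≤ c e^{γt}` for `t ≥ 0`. -/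
theorem stmt_18 (n : ℕ) (h : ℝ) (hh : 0 < h) (Δ : ℝ) (hΔ : Δ ∈ Set.Ioo 0 h)
    (L R : C(Set.Icc (-h) (0:ℝ), Fin n → ℂ) →L[ℂ] (Fin n → ℂ))
    (hL : ∀ φ : C(Set.Icc (-h) (0:ℝ), Fin n → ℂ),
      (∀ s : Set.Icc (-h) (0:ℝ), (↑s : ℝ) ≤ -Δ → φ s = 0) → L φ = 0)
    (LE RE : (Set.Icc (-h) (0:ℝ) → Fin n → ℂ) → Fin n → ℂ)
    (hLE : ∀ (φ : Set.Icc (-h) (0:ℝ) → Fin n → ℂ)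
        (fm : ℕ → C(Set.Icc (-h) (0:ℝ), Fin n → ℂ)),
      (∃ C : ℝ, ∀ m s, ‖fm m s‖ ≤ C) →
      (∀ s, Tendsto (fun m => fm m s) atTop (𝓝 (φ s))) →
      Tendsto (fun m => L (fm m)) atTop (𝓝 (LE φ)))
    (hRE : ∀ (φ : Set.Icc (-h) (0:ℝ) → Fin n → ℂ)
        (fm : ℕ → C(Set.Icc (-h) (0:ℝ), Fin n → ℂ)),
      (∃ C : ℝ, ∀ m s, ‖fm m s‖ ≤ C) →
      (∀ s, Tendsto (fun m => fm m s) atTop (𝓝 (φ s))) →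
      Tendsto (fun m => R (fm m)) atTop (𝓝 (RE φ)))
    (c γ : ℝ) (hc : 0 ≤ c)
    (hS : ∀ (φ : C(Set.Icc (-h) (0:ℝ), Fin n → ℂ)) (v : ℝ → Fin n → ℂ),
      IsNeutralSol n h L R φ v → ∀ t, 0 ≤ t → ∀ s : Set.Icc (-h) (0:ℝ),
        ‖v (t + ↑s)‖ ≤ c * Real.exp (γ * t) * ⨆ u : Set.Icc (-h) (0:ℝ), ‖φ u‖)
    (j : Fin n) (X : ℝ → Fin n → ℂ)
    (hX0 : ∀ t < (0:ℝ), X t = 0)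
    (hXsol : IsGenSol n h LE RE
      (fun s : Set.Icc (-h) (0:ℝ) => if (↑s : ℝ) = 0 then Pi.single j 1 else 0) X) :
    ∀ t, 0 ≤ t → ‖X t‖ ≤ c * Real.exp (γ * t) := by
  obtain ⟨hΔ0, hΔh⟩ := hΔ
  obtain ⟨hXinit, hXprop, hXeq⟩ := hXsol
  have hLE' : SigExt18 L LE := hLE
  have hRE' : SigExt18 R RE := hRE
  have hXi : ∀ a b : ℝ, IntervalIntegrable X volume a b := X_intInt18 hh hX0 hXprop
  set g : ℝ → Fin n → ℂ := fun s => RE fun u : Set.Icc (-h) (0:ℝ) => X (s + ↑u) with hgdef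
  -- g vanishes for negative times
  have hg0 : ∀ s < (0:ℝ), g s = 0 := by
    intro s hs
    have h1 : (fun u : Set.Icc (-h) (0:ℝ) => X (s + ↑u)) = fun _ => 0 := by
      funext u
      rcases u with ⟨u, hu1, hu2⟩
      exact hX0 _ (by simp only []; linarith)
    rw [hgdef]
    simp only [h1]
    exact sigext_zero18 hRE'
  -- g is locally integrable
  have hgi : ∀ a b : ℝ, IntervalIntegrable g volume a b := by
    intro a b
    rw [intervalIntegrable_iff]
    have hne : ∀ᵐ x : ℝ ∂volume, x ≠ (0:ℝ) := by
      rw [ae_iff]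
      have : {x : ℝ | ¬x ≠ 0} = {0} := by ext x; simp
      rw [this]
      exact measure_singleton 0
    have h1 : IntegrableOn g (Set.Iic 0) volume := by
      have hae : g =ᵐ[volume.restrict (Set.Iic 0)] (fun _ => 0) := by
        filter_upwards [ae_restrict_mem measurableSet_Iic, ae_restrict_of_ae hne] with x hx hx0
        exact hg0 x (lt_of_le_of_ne hx hx0)
      exact (integrable_zero _ _ _).congr hae.symm
    have h2 : IntegrableOn g (Set.Ioo 0 (max (max a b) 0 + 1)) volume :=
      (hXeq _ (by positivity)).1
    refine (h1.union h2).mono_set ?_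
    intro x hx
    rcases le_or_gt x 0 with h' | h'
    · exact Or.inl h'
    · refine Or.inr ⟨h', ?_⟩
      have : x ≤ max a b := by
        rcases Set.mem_uIoc.mp hx with h'' | h''
        · exact h''.2.trans (le_max_right a b)
        · exact h''.2.trans (le_max_left a b)
      have h3 : max a b ≤ max (max a b) 0 := le_max_left _ _
      linarith
  set G : ℝ → Fin n → ℂ := fun t => ∫ r in (0:ℝ)..t, g r with hGdef
  have hGc : Continuous G := intervalIntegral.continuous_primitive hgi 0
  have hGi : ∀ a b : ℝ, IntervalIntegrable G volume a b := fun a b =>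
    hGc.intervalIntegrable a b
  set H : ℝ → Fin n → ℂ := fun t => ∫ r in (0:ℝ)..t, G r with hHdef
  have hHd : ∀ t : ℝ, HasDerivAt H (G t) t := fun t =>
    intervalIntegral.integral_hasDerivAt_right (hGi 0 t)
      (hGc.stronglyMeasurableAtFilter _ _) hGc.continuousAt
  have hmem0 : (0:ℝ) ∈ Set.Icc (-h) (0:ℝ) := ⟨by linarith, le_refl 0⟩
  have hX00 : X 0 = Pi.single j 1 := by
    have := hXinit ⟨0, hmem0⟩
    simpa using this
  have hφ0eq : (fun s : Set.Icc (-h) (0:ℝ) => X ((0:ℝ) + ↑s))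
      = (fun s : Set.Icc (-h) (0:ℝ) => if (↑s : ℝ) = 0 then Pi.single j 1 else 0) := by
    funext s
    rw [zero_add]
    exact hXinit s
  have hLEφ0 : LE (fun s : Set.Icc (-h) (0:ℝ) =>
      if (↑s : ℝ) = 0 then Pi.single j 1 else 0) = 0 := by
    rw [← hφ0eq]
    exact LE_small18 hh hΔ0 hL hLE' hX0 hXprop le_rfl hΔ0
  -- the integrated equation, in primitive form
  have heqn : ∀ r : ℝ, 0 ≤ r →
      X r = Pi.single j 1 + (LE (fun s : Set.Icc (-h) (0:ℝ) => X (r + ↑s)) + G r) := by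
    intro r hr
    rcases eq_or_lt_of_le hr with hr0 | hr'
    · subst hr0
      rw [hφ0eq, hLEφ0, hX00]
      have : G 0 = 0 := by rw [hGdef]; simp
      rw [this]
      abel
    · have h2 := (hXeq r hr').2
      rw [hX00, hLEφ0, sub_zero] at h2
      have h3 : G r = ∫ s in Set.Ioo (0:ℝ) r, g s := by
        rw [hGdef]
        simp only
        rw [intervalIntegral.integral_of_le hr'.le, integral_Ioc_eq_integral_Ioo]
      rw [h3]
      have h4 := sub_eq_iff_eq_add.mp h2
      rw [h4]
      abel
  -- LE of near-initial segments vanishes; explicit formula for X near 0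
  have hXsmall : ∀ r : ℝ, 0 ≤ r → r < Δ → X r = Pi.single j 1 + G r := by
    intro r hr0 hrΔ
    rw [heqn r hr0, LE_small18 hh hΔ0 hL hLE' hX0 hXprop hr0 hrΔ, zero_add]
  -- the mollified solutions
  set v : ℝ → ℝ → Fin n → ℂ := fun ε t => ε⁻¹ • ∫ r in t..(t+ε), X r with hvdef
  have hvc : ∀ ε, Continuous (v ε) := fun ε => v_cont18 hXi ε
  -- uniform bound on windows
  have hvbound : ∀ b : ℝ, ∀ C : ℝ, (∀ x : Set.Icc (-h) b, ‖X ↑x‖ ≤ C) →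
      ∀ ε t, 0 < ε → -h ≤ t → t + ε ≤ b → ‖v ε t‖ ≤ C := by
    intro b C hC ε t hε ht htb
    rw [hvdef]
    simp only
    rw [norm_smul, Real.norm_eq_abs, abs_of_pos (inv_pos.mpr hε)]
    have h1 : ‖∫ r in t..(t+ε), X r‖ ≤ C * |t + ε - t| := by
      apply intervalIntegral.norm_integral_le_of_norm_le_const
      intro x hx
      rw [Set.uIoc_of_le (by linarith)] at hx
      exact hC ⟨x, ⟨by linarith [hx.1], by linarith [hx.2]⟩⟩
    rw [show t + ε - t = ε by ring, abs_of_pos hε] at h1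
    calc ε⁻¹ * ‖∫ r in t..(t+ε), X r‖ ≤ ε⁻¹ * (C * ε) :=
          mul_le_mul_of_nonneg_left h1 (inv_pos.mpr hε).le
      _ = C := by field_simp
  -- the key identity for L on mollified windows
  have hkey : ∀ ε, 0 < ε → ε ≤ 1 → ∀ τ, 0 ≤ τ →
      ∀ w : C(Set.Icc (-h) (0:ℝ), Fin n → ℂ),
      (∀ s : Set.Icc (-h) (0:ℝ), w s = v ε (τ + ↑s)) →
      L w = v ε τ - Pi.single j 1 - ε⁻¹ • ∫ r in τ..(τ+ε), G r := by
    intro ε hε hε1 τ hτ w hwv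
    have hw' : ∀ s : Set.Icc (-h) (0:ℝ),
        w s = ε⁻¹ • ∫ r in (τ + ↑s)..(τ + ↑s + ε), X r := by
      intro s
      rw [hwv s, hvdef]
    have hM := lemM18 hh L LE hLE' hXprop hτ hε hε1 w hw'
    have h6 : ∀ u ∈ Set.Ioo (0:ℝ) ε,
        LE (fun s : Set.Icc (-h) (0:ℝ) => X (τ + u + ↑s))
          = X (τ + u) - Pi.single j 1 - G (τ + u) := by
      intro u hu
      have h7 := heqn (τ + u) (by linarith [hu.1])
      rw [h7]
      abel
    rw [setIntegral_congr_fun measurableSet_Ioo h6] at hM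
    have hXτint : IntervalIntegrable (fun u => X (τ + u)) volume 0 ε := by
      have := (hXi (τ + 0) (τ + ε)).comp_add_left τ
      simpa using this
    have hGτint : IntervalIntegrable (fun u => G (τ + u)) volume 0 ε :=
      (hGc.comp (continuous_const.add continuous_id)).intervalIntegrable 0 ε
    have h8 : ∫ u in Set.Ioo (0:ℝ) ε,
        (X (τ + u) - Pi.single j 1 - G (τ + u))
        = (∫ r in τ..(τ+ε), X r) - ε • (Pi.single j 1 : Fin n → ℂ)
          - ∫ r in τ..(τ+ε), G r := by
      rw [← integral_Ioc_eq_integral_Ioo, ← intervalIntegral.integral_of_le hε.le]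
      rw [intervalIntegral.integral_sub (hXτint.sub (intervalIntegrable_const)) hGτint]
      rw [intervalIntegral.integral_sub hXτint intervalIntegrable_const]
      rw [intervalIntegral.integral_const]
      rw [show ∫ u in (0:ℝ)..ε, X (τ + u) = ∫ r in (τ+0)..(τ+ε), X r from
        integral_comp_add_left (fun r => X r) τ]
      rw [show ∫ u in (0:ℝ)..ε, G (τ + u) = ∫ r in (τ+0)..(τ+ε), G r from
        integral_comp_add_left (fun r => G r) τ]
      rw [add_zero, sub_zero]
    rw [h8] at hM
    rw [hM, smul_sub, smul_sub, smul_smul, inv_mul_cancel₀ hε.ne', one_smul, hvdef]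
  -- v ε is a classical solution
  have hsol : ∀ ε, 0 < ε → ε ≤ 1 →
      IsNeutralSol n h L R
        ⟨fun s => v ε ↑s, by fun_prop⟩ (v ε) := by
    intro ε hε hε1
    refine ⟨(hvc ε).continuousOn, fun s => by rw [ContinuousMap.coe_mk], ?_⟩
    refine ⟨fun τ => ⟨fun s => v ε (τ + ↑s),
      by fun_prop⟩,
      fun t ht s => by rw [ContinuousMap.coe_mk], ?_⟩
    intro t ht
    have hFΦ : ∀ τ ∈ Set.Ici (0:ℝ), v ε τ - L ⟨fun s => v ε (τ + ↑s),
        by fun_prop⟩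
        = Pi.single j 1 + ε⁻¹ • (H (τ + ε) - H τ) := by
      intro τ hτ
      rw [hkey ε hε hε1 τ hτ _ (fun s => rfl)]
      have h9 : ∫ r in τ..(τ+ε), G r = H (τ + ε) - H τ := by
        rw [hHdef]
        exact (integral_interval_sub_left (hGi 0 (τ+ε)) (hGi 0 τ)).symm
      rw [h9]
      abel
    have hΦd : HasDerivAt (fun τ => Pi.single j 1 + ε⁻¹ • (H (τ + ε) - H τ))
        (ε⁻¹ • (G (t + ε) - G t)) t := by
      have h1 : HasDerivAt (fun τ => H (τ + ε)) (G (t + ε)) t := by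
        have h2 := hHd (t + ε)
        have h3 : HasDerivAt (fun τ : ℝ => τ + ε) 1 t := (hasDerivAt_id t).add_const ε
        exact (HasDerivAt.scomp t h2 h3).congr_deriv (one_smul _ _)
      exact ((h1.sub (hHd t)).const_smul ε⁻¹).const_add _
    have hRV : R ⟨fun s => v ε (t + ↑s),
        by fun_prop⟩
        = ε⁻¹ • (G (t + ε) - G t) := by
      have hw' : ∀ s : Set.Icc (-h) (0:ℝ),
          (⟨fun s => v ε (t + ↑s),
            by fun_prop⟩ :
            C(Set.Icc (-h) (0:ℝ), Fin n → ℂ)) s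
            = ε⁻¹ • ∫ r in (t + ↑s)..(t + ↑s + ε), X r := by
        intro s
        rw [ContinuousMap.coe_mk, hvdef]
      have hM := lemM18 hh R RE hRE' hXprop ht hε hε1 _ hw'
      rw [hM]
      congr 1
      have h10 : ∫ u in Set.Ioo (0:ℝ) ε,
          RE (fun s : Set.Icc (-h) (0:ℝ) => X (t + u + ↑s))
          = ∫ u in (0:ℝ)..ε, g (t + u) := by
        rw [intervalIntegral.integral_of_le hε.le, integral_Ioc_eq_integral_Ioo]
      rw [h10]
      rw [show ∫ u in (0:ℝ)..ε, g (t + u) = ∫ r in (t+0)..(t+ε), g r from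
        integral_comp_add_left (fun r => g r) t]
      rw [add_zero, hGdef]
      exact (integral_interval_sub_left (hgi 0 (t+ε)) (hgi 0 t)).symm
    rw [hRV]
    exact (hΦd.hasDerivWithinAt).congr hFΦ (hFΦ t (Set.mem_Ici.mpr ht))
  -- bound on the initial window of the mollified solutions
  have hsup : ∀ ε, 0 < ε → ε < Δ → ∀ u : Set.Icc (-h) (0:ℝ),
      ‖v ε ↑u‖ ≤ 1 + ∫ r in (0:ℝ)..ε, ‖g r‖ := by
    intro ε hε hεΔ u
    have hη : 0 ≤ ∫ r in (0:ℝ)..ε, ‖g r‖ :=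
      intervalIntegral.integral_nonneg hε.le (fun r _ => norm_nonneg _)
    obtain ⟨hu1, hu2⟩ := u.2
    rw [hvdef]
    simp only
    rw [norm_smul, Real.norm_eq_abs, abs_of_pos (inv_pos.mpr hε)]
    have h1 : ‖∫ r in (↑u : ℝ)..(↑u+ε), X r‖ ≤ (1 + ∫ r in (0:ℝ)..ε, ‖g r‖) * |↑u + ε - ↑u| := by
      apply intervalIntegral.norm_integral_le_of_norm_le_const
      intro x hx
      rw [Set.uIoc_of_le (by linarith)] at hx
      rcases lt_or_ge x 0 with hx0 | hx0
      · rw [hX0 x hx0, norm_zero]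
        linarith
      · have hxΔ : x < Δ := by linarith [hx.2]
        rw [hXsmall x hx0 hxΔ]
        refine (norm_add_le _ _).trans ?_
        have h10 : ‖(Pi.single j 1 : Fin n → ℂ)‖ = 1 := by
          rw [Pi.norm_single]; exact norm_one
        rw [h10]
        have h11 : ‖G x‖ ≤ ∫ r in (0:ℝ)..x, ‖g r‖ := by
          rw [hGdef]
          exact intervalIntegral.norm_integral_le_integral_norm hx0
        have h12 : ∫ r in (0:ℝ)..x, ‖g r‖ ≤ ∫ r in (0:ℝ)..ε, ‖g r‖ :=
          intervalIntegral.integral_mono_interval le_rfl hx0 (by linarith [hx.2])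
            (Filter.Eventually.of_forall (fun r => norm_nonneg _)) (hgi 0 ε).norm
        linarith
    rw [show (↑u : ℝ) + ε - ↑u = ε by ring, abs_of_pos hε] at h1
    calc ε⁻¹ * ‖∫ r in (↑u:ℝ)..(↑u+ε), X r‖
        ≤ ε⁻¹ * ((1 + ∫ r in (0:ℝ)..ε, ‖g r‖) * ε) :=
          mul_le_mul_of_nonneg_left h1 (inv_pos.mpr hε).le
      _ = 1 + ∫ r in (0:ℝ)..ε, ‖g r‖ := by field_simp
  -- the mollification parameters
  set εm : ℕ → ℝ := fun m => ((m : ℝ) + 1)⁻¹ with hεmdef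
  have hεm0 : ∀ m, 0 < εm m := fun m => by rw [hεmdef]; positivity
  have hεm1 : ∀ m, εm m ≤ 1 := by
    intro m
    rw [hεmdef]
    simp only
    rw [inv_le_one₀ (by positivity)]
    have : (0:ℝ) ≤ (m:ℝ) := Nat.cast_nonneg m
    linarith
  have hεmlim : Tendsto εm atTop (𝓝 0) := by
    have : Tendsto (fun n : ℕ => 1 / ((n : ℝ) + 1)) atTop (𝓝 0) :=
      tendsto_one_div_add_atTop_nhds_zero_nat
    simpa [hεmdef, one_div] using this
  -- pointwise convergence for negative times
  have hbase : ∀ t : ℝ, t < 0 → Tendsto (fun m => v (εm m) t) atTop (𝓝 (X t)) := by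
    intro t ht0
    rw [hX0 t ht0]
    apply Tendsto.congr' _ (tendsto_const_nhds (x := (0 : Fin n → ℂ)))
    filter_upwards [hεmlim.eventually_lt_const (show (0:ℝ) < -t by linarith)] with m hm
    rw [hvdef]
    simp only
    rw [intervalIntegral.integral_congr (g := fun _ => (0 : Fin n → ℂ)) ?_]
    · rw [intervalIntegral.integral_zero, smul_zero]
    · intro x hx
      rw [Set.uIcc_of_le (by linarith [hεm0 m])] at hx
      exact hX0 x (by linarith [hx.2, hm])
  -- pointwise convergence everywhere, by steps of length Δ
  have hconv : ∀ (k : ℕ) (t : ℝ), t < k * Δ →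
      Tendsto (fun m => v (εm m) t) atTop (𝓝 (X t)) := by
    intro k
    induction k with
    | zero =>
        intro t ht
        exact hbase t (by simpa using ht)
    | succ k IH =>
        intro t ht
        rcases lt_or_ge t 0 with ht0 | ht0
        · exact hbase t ht0
        · -- the identity for each m
          have hVm : ∀ m, ∃ w : C(Set.Icc (-h) (0:ℝ), Fin n → ℂ),
              (∀ s : Set.Icc (-h) (0:ℝ), w s = v (εm m) (t + ↑s)) := fun m =>
            ⟨⟨fun s => v (εm m) (t + ↑s), by fun_prop⟩, fun s => by rw [ContinuousMap.coe_mk]⟩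
          choose W hW using hVm
          have hvt : ∀ m, v (εm m) t
              = L (W m) + (Pi.single j 1 + (εm m)⁻¹ • ∫ r in t..(t + εm m), G r) := by
            intro m
            rw [hkey (εm m) (hεm0 m) (hεm1 m) t ht0 (W m) (hW m)]
            abel
          -- limit of the integral term
          have hlim1 : Tendsto (fun m => (εm m)⁻¹ • ∫ r in t..(t + εm m), G r)
              atTop (𝓝 (G t)) := by
            have hym : Tendsto (fun m => t + εm m) atTop (𝓝[≠] t) := by
              apply tendsto_nhdsWithin_of_tendsto_nhds_of_eventually_within
              · simpa using (tendsto_const_nhds (x := t)).add hεmlim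
              · filter_upwards with m
                exact Set.mem_compl_singleton_iff.mpr
                  (ne_of_gt (lt_add_of_pos_right t (hεm0 m)))
            have hslope := (hasDerivAt_iff_tendsto_slope.mp (hHd t)).comp hym
            apply hslope.congr
            intro m
            show slope H t (t + εm m) = _
            rw [slope_def_module]
            rw [show t + εm m - t = εm m by ring]
            congr 1
            rw [hHdef]
            simp only
            exact integral_interval_sub_left (hGi 0 (t + εm m)) (hGi 0 t)
          -- limit of the operator term
          obtain ⟨Cb, hCb0, hCb⟩ := propA_bound18 (hXprop (t + 1))
          have hmins : ∀ s : Set.Icc (-h) (0:ℝ), -h ≤ min (↑s : ℝ) (-Δ) ∧ min (↑s : ℝ) (-Δ) ≤ -Δ := by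
            rintro ⟨s, hs1, hs2⟩
            exact ⟨le_min hs1 (by linarith), min_le_right _ _⟩
          have hΨ : ∀ m, ∃ w : C(Set.Icc (-h) (0:ℝ), Fin n → ℂ),
              (∀ s : Set.Icc (-h) (0:ℝ), w s = v (εm m) (t + min (↑s : ℝ) (-Δ))) := by
            intro m
            refine ⟨⟨fun s => v (εm m) (t + min (↑s : ℝ) (-Δ)), ?_⟩, fun s => by rw [ContinuousMap.coe_mk]⟩
            apply (hvc (εm m)).comp
            exact continuous_const.add ((continuous_subtype_val.min continuous_const))
          choose Ψ hΨap using hΨ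
          have hLWΨ : ∀ m, L (W m) = L (Ψ m) := by
            intro m
            have hz : L (W m - Ψ m) = 0 := by
              apply hL
              intro s hsΔ
              rw [ContinuousMap.sub_apply, hW m s, hΨap m s,
                min_eq_left hsΔ, sub_self]
            rw [map_sub] at hz
            exact sub_eq_zero.mp hz
          have hlim2 : Tendsto (fun m => L (W m)) atTop
              (𝓝 (LE (fun s : Set.Icc (-h) (0:ℝ) => X (t + min (↑s : ℝ) (-Δ))))) := by
            simp only [hLWΨ]
            apply hLE' _ Ψ
            · refine ⟨Cb, fun m s => ?_⟩
              rw [hΨap m s]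
              apply hvbound (t + 1) Cb hCb (εm m) _ (hεm0 m)
              · linarith [(hmins s).1]
              · have := (hmins s).2
                have := hεm1 m
                linarith
            · intro s
              have h18 : (fun m => (Ψ m) s) = fun m => v (εm m) (t + min (↑s:ℝ) (-Δ)) :=
                funext (fun m => hΨap m s)
              rw [h18]
              apply IH
              have h19 : t < ↑k * Δ + Δ := by push_cast at ht; linarith
              have := (hmins s).2
              linarith
          -- identify the limit of the operator term with LE X_t
          have hagree : LE (fun s : Set.Icc (-h) (0:ℝ) => X (t + min (↑s : ℝ) (-Δ)))
              = LE (fun s : Set.Icc (-h) (0:ℝ) => X (t + ↑s)) := by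
            have hbt : -h ≤ t := by linarith
            obtain ⟨f2, hf2c, ⟨C2, hf2C⟩, hf2lim⟩ := hXprop t
            have hca : Continuous fun s : Set.Icc (-h) (0:ℝ) =>
                Set.projIcc (-h) t hbt (t + (↑s:ℝ)) :=
              continuous_projIcc.comp (continuous_const.add continuous_subtype_val)
            have hcb : Continuous fun s : Set.Icc (-h) (0:ℝ) =>
                Set.projIcc (-h) t hbt (t + min (↑s:ℝ) (-Δ)) :=
              continuous_projIcc.comp
                (continuous_const.add (continuous_subtype_val.min continuous_const))
            have hmema : ∀ s : Set.Icc (-h) (0:ℝ), t + ↑s ∈ Set.Icc (-h) t := by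
              rintro ⟨s, hs1, hs2⟩
              exact ⟨by simp only []; linarith, by simp only []; linarith⟩
            have hmemb : ∀ s : Set.Icc (-h) (0:ℝ),
                t + min (↑s : ℝ) (-Δ) ∈ Set.Icc (-h) t := by
              intro s
              have h14 := (hmins s).1
              have h15 := (hmins s).2
              exact ⟨by linarith, by linarith⟩
            have ha : Tendsto (fun kk => L ⟨_, (hf2c kk).comp hca⟩) atTop
                (𝓝 (LE (fun s : Set.Icc (-h) (0:ℝ) => X (t + ↑s)))) := by
              apply hLE'
              · exact ⟨C2, fun kk s => hf2C kk _⟩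
              · intro s
                simp only [ContinuousMap.coe_mk, Function.comp_apply]
                rw [Set.projIcc_of_mem hbt (hmema s)]
                exact hf2lim _
            have hb2 : Tendsto (fun kk => L ⟨_, (hf2c kk).comp hcb⟩) atTop
                (𝓝 (LE (fun s : Set.Icc (-h) (0:ℝ) => X (t + min (↑s : ℝ) (-Δ))))) := by
              apply hLE'
              · exact ⟨C2, fun kk s => hf2C kk _⟩
              · intro s
                simp only [ContinuousMap.coe_mk, Function.comp_apply]
                rw [Set.projIcc_of_mem hbt (hmemb s)]
                exact hf2lim _
            have hab : ∀ kk : ℕ,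
                L ⟨_, (hf2c kk).comp hca⟩ = L ⟨_, (hf2c kk).comp hcb⟩ := by
              intro kk
              have hz : L (⟨_, (hf2c kk).comp hca⟩ - ⟨_, (hf2c kk).comp hcb⟩) = 0 := by
                apply hL
                intro s hsΔ
                rw [ContinuousMap.sub_apply]
                simp only [ContinuousMap.coe_mk, Function.comp_apply]
                rw [min_eq_left hsΔ, sub_self]
              rw [map_sub] at hz
              exact sub_eq_zero.mp hz
            simp only [hab] at ha
            exact tendsto_nhds_unique hb2 ha
          rw [hagree] at hlim2
          -- combine
          have hXt : X t = LE (fun s : Set.Icc (-h) (0:ℝ) => X (t + ↑s))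
              + (Pi.single j 1 + G t) := by
            rw [heqn t ht0]
            abel
          rw [hXt]
          simp only [hvt]
          exact hlim2.add (tendsto_const_nhds.add hlim1)
  -- final assembly
  intro t ht
  have hconv' : Tendsto (fun m => v (εm m) t) atTop (𝓝 (X t)) := by
    obtain ⟨k, hk⟩ := exists_nat_gt (t / Δ)
    exact hconv k t ((div_lt_iff₀ hΔ0).mp hk)
  set η : ℕ → ℝ := fun m => ∫ r in (0:ℝ)..(εm m), ‖g r‖ with hηdef
  have hηnn : ∀ m, 0 ≤ η m := fun m =>
    intervalIntegral.integral_nonneg (hεm0 m).le (fun r _ => norm_nonneg _)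
  have hηlim : Tendsto η atTop (𝓝 0) := by
    have hcont := (intervalIntegral.continuous_primitive
      (fun a b => (hgi a b).norm) 0).continuousAt (x := 0)
    have h16 := hcont.tendsto.comp hεmlim
    simp only [intervalIntegral.integral_same] at h16
    exact h16
  have hbnd : ∀ᶠ m in atTop, ‖v (εm m) t‖ ≤ c * Real.exp (γ * t) * (1 + η m) := by
    filter_upwards [hεmlim.eventually_lt_const hΔ0] with m hm
    have hSS := hS _ _ (hsol (εm m) (hεm0 m) (hεm1 m)) t ht ⟨0, hmem0⟩
    rw [show t + ((⟨0, hmem0⟩ : Set.Icc (-h) (0:ℝ)) : ℝ) = t by simp] at hSS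
    refine hSS.trans ?_
    apply mul_le_mul_of_nonneg_left _ (by positivity)
    apply Real.iSup_le _ (by linarith [hηnn m])
    intro u
    rw [ContinuousMap.coe_mk]
    exact hsup (εm m) (hεm0 m) hm u
  have hfb : Tendsto (fun m => c * Real.exp (γ * t) * (1 + η m)) atTop
      (𝓝 (c * Real.exp (γ * t))) := by
    have h17 : Tendsto (fun m => (1:ℝ) + η m) atTop (𝓝 1) := by
      simpa using (tendsto_const_nhds (x := (1:ℝ))).add hηlim
    simpa using (tendsto_const_nhds (x := c * Real.exp (γ * t))).mul h17
  exact le_of_tendsto_of_tendsto hconv'.norm hfb hbnd
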